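/- Let γ(t) = (x(t), y(t)) be a formal parametrization with x ≠ 0, y ≠ 0 and ord_t(x) < ord_t(y), and set u(t) := y(t)/x(t) ∈ ℂ[[t]] (so u(0) = 0 and u ≠ 0). Let P, Q ∈ ℂ[[x,y]] satisfy the invariance relation (P∘γ)·x'(t) + (Q∘γ)·y'(t) = 0, with Q∘γ ≠ 0. Then ord_t(P∘γ + u·(Q∘γ)) = ord_t(u) + ord_t(Q∘γ). -/

import Mathlib

/-- Substitution `F(x(t), y(t))` of a two-variable formal power series `F ∈ ℂ[[x,y]]`
along a pair of one-variable formal power series (a formal parametrization `γ = (x, y)`;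
this is the usual substitution when `x` and `y` have zero constant term, since then
`coeff n (x ^ i * y ^ j) = 0` whenever `i + j > n`). -/
noncomputable def pcomp (F : MvPowerSeries (Fin 2) ℂ) (x y : PowerSeries ℂ) : PowerSeries ℂ :=
  PowerSeries.mk fun n => ∑ p ∈ Finset.range (n + 1) ×ˢ Finset.range (n + 1),
    MvPowerSeries.coeff (Finsupp.single (0 : Fin 2) p.1 + Finsupp.single (1 : Fin 2) p.2) F *
      PowerSeries.coeff n (x ^ p.1 * y ^ p.2)

/-- Let `γ = (x, y)` be a formal parametrization with `x ≠ 0`, `y ≠ 0`,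
`ord_t x < ord_t y`, and write `y = x·u` (so `u(0) = 0` and `u ≠ 0`). If `γ` is
invariant for `ω = P dx + Q dy` and `Q∘γ ≠ 0`, then
`ord_t(P∘γ + u·(Q∘γ)) = ord_t u + ord_t(Q∘γ)`. -/
private lemma order_neg' (f : PowerSeries ℂ) : (-f).order = f.order := by
  have h : (-f) = (-1 : PowerSeries ℂ) * f := by ring
  have hu : IsUnit (-1 : PowerSeries ℂ) := IsUnit.neg isUnit_one
  rw [h, PowerSeries.order_mul, PowerSeries.order_zero_of_unit hu, zero_add]

private lemma deriv_order (f : PowerSeries ℂ) (hf : f ≠ 0)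
    (h0 : PowerSeries.constantCoeff f = 0) :
    f.derivativeFun.order + 1 = f.order := by
  obtain ⟨m, hm⟩ : ∃ m : ℕ, f.order = m := by
    have := PowerSeries.order_finite_iff_ne_zero.mpr hf
    lift f.order to ℕ using this.ne with m hmm
    exact ⟨m, rfl⟩
  obtain ⟨hne, hlt⟩ := PowerSeries.order_eq_nat.mp hm
  have hm0 : m ≠ 0 := by
    rintro rfl
    exact hne (by simpa using h0)
  obtain ⟨k, rfl⟩ := Nat.exists_eq_succ_of_ne_zero hm0
  have hdo : f.derivativeFun.order = k := by
    rw [PowerSeries.order_eq_nat]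
    constructor
    · rw [show f.derivativeFun = PowerSeries.derivative ℂ f from rfl, PowerSeries.coeff_derivative]
      exact mul_ne_zero hne (Nat.cast_add_one_ne_zero k)
    · intro i hi
      rw [show f.derivativeFun = PowerSeries.derivative ℂ f from rfl, PowerSeries.coeff_derivative, hlt (i + 1) (by omega), zero_mul]
  rw [hdo, hm]
  norm_num

theorem stmt_3 (x y u : PowerSeries ℂ) (hx0 : PowerSeries.constantCoeff x = 0)
    (hy0 : PowerSeries.constantCoeff y = 0) (hx : x ≠ 0) (hy : y ≠ 0)
    (hord : x.order < y.order) (hyu : y = x * u)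
    (hu0 : PowerSeries.constantCoeff u = 0) (hu : u ≠ 0)
    (P Q : MvPowerSeries (Fin 2) ℂ)
    (hinv : pcomp P x y * x.derivativeFun + pcomp Q x y * y.derivativeFun = 0)
    (hQ : pcomp Q x y ≠ 0) :
    (pcomp P x y + u * pcomp Q x y).order = u.order + (pcomp Q x y).order := by
  set A := pcomp P x y with hA
  set B := pcomp Q x y with hB
  have hxd : x.derivativeFun.order + 1 = x.order := deriv_order x hx hx0
  have hud : u.derivativeFun.order + 1 = u.order := deriv_order u hu hu0
  have hxd0 : x.derivativeFun ≠ 0 := by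
    intro h
    rw [h, PowerSeries.order_zero] at hxd
    simp only [top_add] at hxd
    exact hx (PowerSeries.order_eq_top.mp hxd.symm)
  have hud0 : u.derivativeFun ≠ 0 := by
    intro h
    rw [h, PowerSeries.order_zero] at hud
    simp only [top_add] at hud
    exact hu (PowerSeries.order_eq_top.mp hud.symm)
  have hyd : y.derivativeFun = x * u.derivativeFun + u * x.derivativeFun := by
    rw [hyu, PowerSeries.derivativeFun_mul]
    simp [smul_eq_mul]
  have key : (A + u * B) * x.derivativeFun = -(B * (x * u.derivativeFun)) := by
    have := hinv
    rw [hyd] at this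
    linear_combination this
  have hRHS : -(B * (x * u.derivativeFun)) ≠ 0 := by
    simp only [neg_ne_zero]
    exact mul_ne_zero hQ (mul_ne_zero hx hud0)
  have hAuB : A + u * B ≠ 0 := by
    intro h
    rw [h, zero_mul] at key
    exact hRHS key.symm
  have horder : (A + u * B).order + x.derivativeFun.order
      = B.order + (x.order + u.derivativeFun.order) := by
    have := congrArg PowerSeries.order key
    rwa [PowerSeries.order_mul, order_neg', PowerSeries.order_mul,
      PowerSeries.order_mul] at this
  have hfin : x.order ≠ (⊤ : ℕ∞) := by
    simpa [PowerSeries.order_eq_top] using hx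
  have h2 : (A + u * B).order + (x.derivativeFun.order + 1)
      = (B.order + u.derivativeFun.order + 1) + x.order := by
    rw [← add_assoc, horder]; ring
  rw [hxd] at h2
  have h3 : B.order + u.derivativeFun.order + 1 = B.order + u.order := by
    rw [add_assoc, hud]
  rw [h3] at h2
  have := WithTop.add_right_cancel hfin h2
  rw [this, add_comm]
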